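/- If a probability density on ℝ has the form f(x) = e^{−x²/2 − V(x)} with V convex, then a random variable X with density f satisfies Var[X] ≤ 1. -/

import Mathlib

open MeasureTheory Real

/-- `f` has the form `f x = e^{-x²/2 - V x}` with `V : ℝ → ℝ ∪ {∞}` convex; equivalently,
`x ↦ f x · e^{x²/2}` is log-concave (the density is more log-concave than the Gaussian). -/
def RelLogConcave (f : ℝ → ℝ) : Prop :=
  ∀ x y a b : ℝ, 0 ≤ a → 0 ≤ b → a + b = 1 →
    (f x * Real.exp (x ^ 2 / 2)) ^ a * (f y * Real.exp (y ^ 2 / 2)) ^ b ≤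
      f (a * x + b * y) * Real.exp ((a * x + b * y) ^ 2 / 2)

section Aux

open Set

/-- auxiliary predicate: nonnegative log-concave function. -/
def LCfun (F : ℝ → ℝ) : Prop :=
  (∀ x, 0 ≤ F x) ∧ ∀ ⦃x y a b : ℝ⦄, 0 < a → 0 < b → a + b = 1 →
    F x ^ a * F y ^ b ≤ F (a * x + b * y)

lemma LCfun.levelset {F : ℝ → ℝ} (hF : LCfun F) {s : ℝ} (hs : 0 ≤ s) :
    OrdConnected {x | s < F x} := by
  constructor
  rintro x hx y hy z hz
  rcases eq_or_lt_of_le hz.1 with rfl | h1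
  · exact hx
  rcases eq_or_lt_of_le hz.2 with rfl | h2
  · exact hy
  have hxy : x < y := lt_trans h1 h2
  set a : ℝ := (y - z) / (y - x) with ha
  set b : ℝ := (z - x) / (y - x) with hb
  have hd : (0:ℝ) < y - x := by linarith
  have hap : 0 < a := div_pos (by linarith) hd
  have hbp : 0 < b := div_pos (by linarith) hd
  have hab : a + b = 1 := by
    rw [ha, hb, ← add_div, div_eq_one_iff_eq hd.ne']; ring
  have hz' : a * x + b * y = z := by rw [ha, hb]; field_simp; ring
  have key := hF.2 (x := x) (y := y) hap hbp hab
  rw [hz'] at key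
  have hFx : s < F x := hx
  have hFy : s < F y := hy
  show s < F z
  rcases eq_or_lt_of_le hs with rfl | hs'
  · have : 0 < F x ^ a * F y ^ b :=
      mul_pos (Real.rpow_pos_of_pos hFx a) (Real.rpow_pos_of_pos hFy b)
    exact lt_of_lt_of_le this key
  · have h1' : s ^ a < F x ^ a := Real.rpow_lt_rpow hs hFx hap
    have h2' : s ^ b < F y ^ b := Real.rpow_lt_rpow hs hFy hbp
    have hlt : s ^ a * s ^ b < F x ^ a * F y ^ b :=
      mul_lt_mul' h1'.le h2' (Real.rpow_nonneg hs _)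
        (Real.rpow_pos_of_pos (lt_of_le_of_lt hs hFx) a)
    have hss : s ^ a * s ^ b = s := by
      rw [← Real.rpow_add hs', hab, Real.rpow_one]
    calc s = s ^ a * s ^ b := hss.symm
      _ < F x ^ a * F y ^ b := hlt
      _ ≤ F z := key

lemma LCfun.measurable {F : ℝ → ℝ} (hF : LCfun F) : Measurable F := by
  apply measurable_of_Ioi
  intro s
  rcases lt_or_ge s 0 with hs | hs
  · have : F ⁻¹' Ioi s = univ := by
      ext x; simp only [mem_preimage, mem_Ioi, mem_univ, iff_true]
      exact lt_of_lt_of_le hs (hF.1 x)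
    rw [this]; exact MeasurableSet.univ
  · exact (hF.levelset hs).measurableSet

lemma LCfun.mul {F G : ℝ → ℝ} (hF : LCfun F) (hG : LCfun G) :
    LCfun (fun x => F x * G x) := by
  refine ⟨fun x => mul_nonneg (hF.1 x) (hG.1 x), fun x y a b ha hb hab => ?_⟩
  calc (F x * G x) ^ a * (F y * G y) ^ b
      = (F x ^ a * F y ^ b) * (G x ^ a * G y ^ b) := by
        rw [Real.mul_rpow (hF.1 x) (hG.1 x), Real.mul_rpow (hF.1 y) (hG.1 y)]; ring
    _ ≤ F (a*x+b*y) * G (a*x+b*y) := by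
        apply mul_le_mul (hF.2 ha hb hab) (hG.2 ha hb hab)
          (mul_nonneg (Real.rpow_nonneg (hG.1 x) _) (Real.rpow_nonneg (hG.1 y) _))
          ((hF.1 _))

lemma LCfun.exp_concave {L : ℝ → ℝ}
    (hL : ∀ ⦃x y a b : ℝ⦄, 0 < a → 0 < b → a + b = 1 → a * L x + b * L y ≤ L (a*x+b*y)) :
    LCfun (fun x => Real.exp (L x)) := by
  refine ⟨fun x => (Real.exp_pos _).le, fun x y a b ha hb hab => ?_⟩
  show Real.exp (L x) ^ a * Real.exp (L y) ^ b ≤ Real.exp (L (a*x+b*y))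
  rw [← Real.exp_mul, ← Real.exp_mul, ← Real.exp_add]
  exact Real.exp_le_exp.2 (by rw [mul_comm (L x) a, mul_comm (L y) b]; exact hL ha hb hab)

lemma LCfun.const_mul {F : ℝ → ℝ} (hF : LCfun F) {c : ℝ} (hc : 0 ≤ c) :
    LCfun (fun x => c * F x) := by
  refine ⟨fun x => mul_nonneg hc (hF.1 x), fun x y a b ha hb hab => ?_⟩
  calc (c * F x) ^ a * (c * F y) ^ b
      = (c ^ a * c ^ b) * (F x ^ a * F y ^ b) := by
        rw [Real.mul_rpow hc (hF.1 x), Real.mul_rpow hc (hF.1 y)]; ring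
    _ ≤ c * F (a*x+b*y) := by
        have : c ^ a * c ^ b = c := by
          rw [← Real.rpow_add' hc (by rw [hab]; norm_num), hab, Real.rpow_one]
        rw [this]
        exact mul_le_mul_of_nonneg_left (hF.2 ha hb hab) hc

lemma LCfun.min_const {F : ℝ → ℝ} (hF : LCfun F) {n : ℝ} (hn : 0 ≤ n) :
    LCfun (fun x => min (F x) n) := by
  refine ⟨fun x => le_min (hF.1 x) hn, fun x y a b ha hb hab => ?_⟩
  apply le_min
  · calc min (F x) n ^ a * min (F y) n ^ b ≤ F x ^ a * F y ^ b := by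
          apply mul_le_mul (Real.rpow_le_rpow (le_min (hF.1 x) hn) (min_le_left _ _) ha.le)
            (Real.rpow_le_rpow (le_min (hF.1 y) hn) (min_le_left _ _) hb.le)
            (Real.rpow_nonneg (le_min (hF.1 y) hn) _) (Real.rpow_nonneg (hF.1 x) _)
      _ ≤ F (a*x+b*y) := hF.2 ha hb hab
  · calc min (F x) n ^ a * min (F y) n ^ b ≤ n ^ a * n ^ b := by
          apply mul_le_mul (Real.rpow_le_rpow (le_min (hF.1 x) hn) (min_le_right _ _) ha.le)
            (Real.rpow_le_rpow (le_min (hF.1 y) hn) (min_le_right _ _) hb.le)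
            (Real.rpow_nonneg (le_min (hF.1 y) hn) _) (Real.rpow_nonneg hn _)
      _ = n := by rw [← Real.rpow_add' hn (by rw [hab]; norm_num), hab, Real.rpow_one]

lemma LCfun.indicator_Icc {F : ℝ → ℝ} (hF : LCfun F) (u v : ℝ) :
    LCfun (fun x => Set.indicator (Icc u v) F x) := by
  refine ⟨fun x => Set.indicator_nonneg (fun y _ => hF.1 y) x, fun x y a b ha hb hab => ?_⟩
  show (Icc u v).indicator F x ^ a * (Icc u v).indicator F y ^ b ≤
    (Icc u v).indicator F (a*x+b*y)
  by_cases hx : x ∈ Icc u v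
  · by_cases hy : y ∈ Icc u v
    · have hz : a*x+b*y ∈ Icc u v := by
        constructor
        · calc u = a*u + b*u := by rw [← add_mul, hab, one_mul]
            _ ≤ a*x+b*y := add_le_add (mul_le_mul_of_nonneg_left hx.1 ha.le)
                (mul_le_mul_of_nonneg_left hy.1 hb.le)
        · calc a*x+b*y ≤ a*v + b*v := add_le_add (mul_le_mul_of_nonneg_left hx.2 ha.le)
                (mul_le_mul_of_nonneg_left hy.2 hb.le)
            _ = v := by rw [← add_mul, hab, one_mul]
      rw [Set.indicator_of_mem hx, Set.indicator_of_mem hy, Set.indicator_of_mem hz]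
      exact hF.2 ha hb hab
    · rw [Set.indicator_of_notMem hy, Real.zero_rpow hb.ne', mul_zero]
      exact Set.indicator_nonneg (fun z _ => hF.1 z) _
  · rw [Set.indicator_of_notMem hx, Real.zero_rpow ha.ne', zero_mul]
    exact Set.indicator_nonneg (fun z _ => hF.1 z) _

lemma midpoint_vol {A B C : Set ℝ} (hA : A.OrdConnected) (hB : B.OrdConnected)
    (hC : C.OrdConnected) (hAne : A.Nonempty) (hBne : B.Nonempty)
    (hM : ∀ x ∈ A, ∀ y ∈ B, (x + y) / 2 ∈ C) :
    volume A + volume B ≤ 2 * volume C := by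
  obtain ⟨x0, hx0⟩ := hAne
  obtain ⟨y0, hy0⟩ := hBne
  have hc0 : (x0 + y0) / 2 ∈ C := hM x0 hx0 y0 hy0
  have hCne : C.Nonempty := ⟨_, hc0⟩
  by_cases hCtop : volume C = ⊤
  · rw [hCtop, ENNReal.mul_top (by norm_num)]; exact le_top
  -- C is bounded above
  have hCa : BddAbove C := by
    by_contra hcon
    rw [not_bddAbove_iff] at hcon
    obtain ⟨c, hc, hcgt⟩ := hcon ((x0 + y0) / 2 + (volume C).toReal + 1)
    have hsub : Set.Icc ((x0 + y0) / 2) c ⊆ C := hC.out hc0 hc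
    have h1 : volume (Set.Icc ((x0 + y0) / 2) c) ≤ volume C := measure_mono hsub
    rw [Real.volume_Icc] at h1
    have h2 := ENNReal.toReal_mono hCtop h1
    rw [ENNReal.toReal_ofReal (by linarith [ENNReal.toReal_nonneg (a := volume C)])] at h2
    linarith
  have hCb : BddBelow C := by
    by_contra hcon
    rw [not_bddBelow_iff] at hcon
    obtain ⟨c, hc, hclt⟩ := hcon ((x0 + y0) / 2 - (volume C).toReal - 1)
    have hsub : Set.Icc c ((x0 + y0) / 2) ⊆ C := hC.out hc hc0
    have h1 : volume (Set.Icc c ((x0 + y0) / 2)) ≤ volume C := measure_mono hsub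
    rw [Real.volume_Icc] at h1
    have h2 := ENNReal.toReal_mono hCtop h1
    rw [ENNReal.toReal_ofReal (by linarith [ENNReal.toReal_nonneg (a := volume C)])] at h2
    linarith
  set cS := sSup C with hcS
  set cI := sInf C with hcI
  -- A and B are bounded
  have hAa : BddAbove A := ⟨2 * cS - y0, fun x hx => by
    have := le_csSup hCa (hM x hx y0 hy0); linarith⟩
  have hAb : BddBelow A := ⟨2 * cI - y0, fun x hx => by
    have := csInf_le hCb (hM x hx y0 hy0); linarith⟩
  have hBa : BddAbove B := ⟨2 * cS - x0, fun y hy => by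
    have := le_csSup hCa (hM x0 hx0 y hy); linarith⟩
  have hBb : BddBelow B := ⟨2 * cI - x0, fun y hy => by
    have := csInf_le hCb (hM x0 hx0 y hy); linarith⟩
  set aS := sSup A with haS
  set aI := sInf A with haI
  set bS := sSup B with hbS
  set bI := sInf B with hbI
  have keyS : aS + bS ≤ 2 * cS := by
    by_contra hcon
    push_neg at hcon
    set ε := (aS + bS - 2 * cS) / 3 with hε
    have hεp : 0 < ε := by rw [hε]; linarith
    obtain ⟨x, hx, hxgt⟩ := exists_lt_of_lt_csSup ⟨x0, hx0⟩ (show aS - ε < aS by linarith)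
    obtain ⟨y, hy, hygt⟩ := exists_lt_of_lt_csSup ⟨y0, hy0⟩ (show bS - ε < bS by linarith)
    have := le_csSup hCa (hM x hx y hy)
    linarith
  have keyI : 2 * cI ≤ aI + bI := by
    by_contra hcon
    push_neg at hcon
    set ε := (2 * cI - aI - bI) / 3 with hε
    have hεp : 0 < ε := by rw [hε]; linarith
    obtain ⟨x, hx, hxlt⟩ := exists_lt_of_csInf_lt ⟨x0, hx0⟩ (show aI < aI + ε by linarith)
    obtain ⟨y, hy, hylt⟩ := exists_lt_of_csInf_lt ⟨y0, hy0⟩ (show bI < bI + ε by linarith)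
    have := csInf_le hCb (hM x hx y hy)
    linarith
  have haIS : aI ≤ aS := csInf_le_csSup ⟨x0, hx0⟩ hAb hAa
  have hbIS : bI ≤ bS := csInf_le_csSup ⟨y0, hy0⟩ hBb hBa
  have hvolA : volume A ≤ ENNReal.ofReal (aS - aI) := by
    rw [← Real.volume_Icc]
    exact measure_mono (fun x hx => ⟨csInf_le hAb hx, le_csSup hAa hx⟩)
  have hvolB : volume B ≤ ENNReal.ofReal (bS - bI) := by
    rw [← Real.volume_Icc]
    exact measure_mono (fun y hy => ⟨csInf_le hBb hy, le_csSup hBa hy⟩)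
  have hvolC : ENNReal.ofReal (cS - cI) ≤ volume C := by
    rw [← Real.volume_Ioo]
    refine measure_mono (fun z hz => ?_)
    obtain ⟨c1, hc1, hc1lt⟩ := exists_lt_of_csInf_lt hCne hz.1
    obtain ⟨c2, hc2, hc2gt⟩ := exists_lt_of_lt_csSup hCne hz.2
    exact hC.out hc1 hc2 ⟨hc1lt.le, hc2gt.le⟩
  calc volume A + volume B ≤ ENNReal.ofReal (aS - aI) + ENNReal.ofReal (bS - bI) :=
        add_le_add hvolA hvolB
    _ = ENNReal.ofReal ((aS - aI) + (bS - bI)) := (ENNReal.ofReal_add (by linarith) (by linarith)).symm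
    _ ≤ ENNReal.ofReal (2 * (cS - cI)) := ENNReal.ofReal_le_ofReal (by linarith)
    _ = 2 * ENNReal.ofReal (cS - cI) := by
        rw [ENNReal.ofReal_mul (by norm_num : (0:ℝ) ≤ 2), ENNReal.ofReal_ofNat]
    _ ≤ 2 * volume C := mul_le_mul_right hvolC 2

lemma pl_add {F G H : ℝ → ℝ} (hF : LCfun F) (hG : LCfun G) (hH : LCfun H)
    (hsup : ∀ s : ℝ, 0 < s → ({x | s < F x}.Nonempty ↔ {x | s < G x}.Nonempty))
    (hyp : ∀ x y, F x * G y ≤ H ((x + y) / 2) ^ 2) :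
    (∫⁻ x, ENNReal.ofReal (F x)) + (∫⁻ x, ENNReal.ofReal (G x)) ≤
      2 * ∫⁻ x, ENNReal.ofReal (H x) := by
  rw [lintegral_eq_lintegral_meas_lt volume (Filter.Eventually.of_forall hF.1)
    hF.measurable.aemeasurable,
    lintegral_eq_lintegral_meas_lt volume (Filter.Eventually.of_forall hG.1)
    hG.measurable.aemeasurable,
    lintegral_eq_lintegral_meas_lt volume (Filter.Eventually.of_forall hH.1)
    hH.measurable.aemeasurable]
  have mF : Measurable (fun t : ℝ => volume {x | t < F x}) := by
    apply Antitone.measurable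
    intro t t' htt'
    exact measure_mono (fun x hx => lt_of_le_of_lt htt' hx)
  have mG : Measurable (fun t : ℝ => volume {x | t < G x}) := by
    apply Antitone.measurable
    intro t t' htt'
    exact measure_mono (fun x hx => lt_of_le_of_lt htt' hx)
  have mH : Measurable (fun t : ℝ => volume {x | t < H x}) := by
    apply Antitone.measurable
    intro t t' htt'
    exact measure_mono (fun x hx => lt_of_le_of_lt htt' hx)
  rw [← lintegral_add_left mF, ← lintegral_const_mul 2 mH]
  apply setLIntegral_mono (mH.const_mul 2)
  intro t ht
  rw [Set.mem_Ioi] at ht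
  by_cases hne : {x | t < F x}.Nonempty
  · have hGne : {x | t < G x}.Nonempty := (hsup t ht).1 hne
    apply midpoint_vol (hF.levelset ht.le) (hG.levelset ht.le) (hH.levelset ht.le) hne hGne
    intro x hx y hy
    show t < H ((x + y) / 2)
    have h1 : t * t < F x * G y :=
      mul_lt_mul'' hx hy ht.le ht.le
    have h2 := hyp x y
    nlinarith [hH.1 ((x + y) / 2)]
  · have hGne : ¬ {x | t < G x}.Nonempty := fun hg => hne ((hsup t ht).2 hg)
    rw [Set.not_nonempty_iff_eq_empty] at hne hGne
    rw [hne, hGne, measure_empty, add_zero]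
    exact zero_le

lemma RelLogConcave.lc {f : ℝ → ℝ} (hf0 : ∀ x, 0 ≤ f x) (hlc : RelLogConcave f) :
    LCfun (fun x => f x * Real.exp (x ^ 2 / 2)) :=
  ⟨fun x => mul_nonneg (hf0 x) (Real.exp_pos _).le,
   fun x y a b ha hb hab => hlc x y a b ha.le hb.le hab⟩

lemma LC_tilt {f : ℝ → ℝ} (hf0 : ∀ x, 0 ≤ f x) (hlc : RelLogConcave f) (l : ℝ) :
    LCfun (fun x => Real.exp (l * x) * f x) := by
  have heq : (fun x => Real.exp (l * x) * f x) =
      fun x => Real.exp (l * x - x ^ 2 / 2) * (f x * Real.exp (x ^ 2 / 2)) := by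
    funext x
    rw [mul_comm (f x) (Real.exp (x ^ 2 / 2)), ← mul_assoc, ← Real.exp_add]
    ring_nf
  rw [heq]
  apply LCfun.mul _ (hlc.lc hf0)
  apply LCfun.exp_concave
  intro x y a b ha hb hab
  have hb' : b = 1 - a := by linarith
  nlinarith [mul_nonneg (mul_nonneg ha.le hb.le) (sq_nonneg (x - y))]

lemma hyp_FGH {f : ℝ → ℝ} (hf0 : ∀ x, 0 ≤ f x) (hlc : RelLogConcave f) (l : ℝ) :
    ∀ x y : ℝ, (Real.exp (l * x) * f x) * (Real.exp (-(l * y)) * f y) ≤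
      (Real.exp (l ^ 2 / 2) * f ((x + y) / 2)) ^ 2 := by
  intro x y
  set g : ℝ → ℝ := fun x => f x * Real.exp (x ^ 2 / 2) with hgdef
  have hg : LCfun g := hlc.lc hf0
  set m := (x + y) / 2 with hm
  have hgm : g x ^ ((1:ℝ)/2) * g y ^ ((1:ℝ)/2) ≤ g m := by
    have := hg.2 (x := x) (y := y) (show (0:ℝ) < 1/2 by norm_num)
      (show (0:ℝ) < 1/2 by norm_num) (show (1:ℝ)/2 + 1/2 = 1 by norm_num)
    have hmeq : (1:ℝ)/2 * x + 1/2 * y = m := by rw [hm]; ring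
    rwa [hmeq] at this
  have hsq : g x * g y ≤ g m ^ 2 := by
    have h1 : (g x ^ ((1:ℝ)/2) * g y ^ ((1:ℝ)/2)) ^ 2 = g x * g y := by
      rw [mul_pow, ← Real.rpow_natCast (g x ^ ((1:ℝ)/2)) 2, ← Real.rpow_natCast (g y ^ ((1:ℝ)/2)) 2,
        ← Real.rpow_mul (hg.1 x), ← Real.rpow_mul (hg.1 y)]
      norm_num
    calc g x * g y = (g x ^ ((1:ℝ)/2) * g y ^ ((1:ℝ)/2)) ^ 2 := h1.symm
      _ ≤ g m ^ 2 := by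
          apply pow_le_pow_left₀ (mul_nonneg (Real.rpow_nonneg (hg.1 x) _)
            (Real.rpow_nonneg (hg.1 y) _)) hgm
  have hfx : f x = Real.exp (-(x ^ 2 / 2)) * g x := by
    rw [hgdef]; simp only []
    rw [mul_comm (f x), ← mul_assoc, ← Real.exp_add]
    simp
  have hfy : f y = Real.exp (-(y ^ 2 / 2)) * g y := by
    rw [hgdef]; simp only []
    rw [mul_comm (f y), ← mul_assoc, ← Real.exp_add]
    simp
  have hfm : f m = Real.exp (-(m ^ 2 / 2)) * g m := by
    rw [hgdef]; simp only []
    rw [mul_comm (f m), ← mul_assoc, ← Real.exp_add]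
    simp
  rw [hfx, hfy, hfm]
  have hL : Real.exp (l*x) * (Real.exp (-(x^2/2)) * g x) *
      (Real.exp (-(l*y)) * (Real.exp (-(y^2/2)) * g y)) =
      Real.exp (l*x - x^2/2 - l*y - y^2/2) * (g x * g y) := by
    rw [show l*x - x^2/2 - l*y - y^2/2 = (l*x + -(x^2/2)) + (-(l*y) + -(y^2/2)) from by ring,
      Real.exp_add, Real.exp_add, Real.exp_add]
    ring
  have hR : (Real.exp (l^2/2) * (Real.exp (-(m^2/2)) * g m))^2 =
      Real.exp (l^2 - m^2) * g m ^ 2 := by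
    rw [show l^2 - m^2 = (l^2/2 + -(m^2/2)) + (l^2/2 + -(m^2/2)) from by ring,
      Real.exp_add, Real.exp_add]
    ring
  rw [hL, hR]
  calc Real.exp (l*x - x^2/2 - l*y - y^2/2) * (g x * g y)
      ≤ Real.exp (l^2 - m^2) * (g x * g y) := by
        apply mul_le_mul_of_nonneg_right _ (mul_nonneg (hg.1 x) (hg.1 y))
        apply Real.exp_le_exp.2
        rw [hm]
        nlinarith [sq_nonneg (l - (x-y)/2)]
    _ ≤ Real.exp (l^2 - m^2) * g m ^ 2 :=
        mul_le_mul_of_nonneg_left hsq (Real.exp_pos _).le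

noncomputable def trunc (φ : ℝ → ℝ) (n : ℕ) : ℝ → ℝ :=
  Set.indicator (Set.Icc (-(n:ℝ)) (n:ℝ)) (fun x => min (φ x) (n:ℝ))

lemma trunc_lc {φ : ℝ → ℝ} (hφ : LCfun φ) (n : ℕ) : LCfun (trunc φ n) :=
  (hφ.min_const (Nat.cast_nonneg n)).indicator_Icc _ _

lemma trunc_nonneg {φ : ℝ → ℝ} (hφ : ∀ x, 0 ≤ φ x) (n : ℕ) (x : ℝ) : 0 ≤ trunc φ n x :=
  Set.indicator_nonneg (fun y _ => le_min (hφ y) (Nat.cast_nonneg n)) x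

lemma trunc_le {φ : ℝ → ℝ} (hφ : ∀ x, 0 ≤ φ x) (n : ℕ) (x : ℝ) : trunc φ n x ≤ φ x := by
  unfold trunc
  by_cases hx : x ∈ Set.Icc (-(n:ℝ)) (n:ℝ)
  · rw [Set.indicator_of_mem hx]; exact min_le_left _ _
  · rw [Set.indicator_of_notMem hx]; exact hφ x

lemma trunc_le_n {φ : ℝ → ℝ} (hφ : ∀ x, 0 ≤ φ x) (n : ℕ) (x : ℝ) : trunc φ n x ≤ (n:ℝ) := by
  unfold trunc
  by_cases hx : x ∈ Set.Icc (-(n:ℝ)) (n:ℝ)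
  · rw [Set.indicator_of_mem hx]; exact min_le_right _ _
  · rw [Set.indicator_of_notMem hx]; exact Nat.cast_nonneg n

lemma trunc_mono {φ : ℝ → ℝ} (hφ : ∀ x, 0 ≤ φ x) {n m : ℕ} (hnm : n ≤ m) (x : ℝ) :
    trunc φ n x ≤ trunc φ m x := by
  unfold trunc
  by_cases hx : x ∈ Set.Icc (-(n:ℝ)) (n:ℝ)
  · have hx' : x ∈ Set.Icc (-(m:ℝ)) (m:ℝ) := by
      have : (n:ℝ) ≤ (m:ℝ) := Nat.cast_le.2 hnm
      exact ⟨le_trans (by linarith) hx.1, le_trans hx.2 this⟩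
    rw [Set.indicator_of_mem hx, Set.indicator_of_mem hx']
    exact min_le_min le_rfl (Nat.cast_le.2 hnm)
  · rw [Set.indicator_of_notMem hx]
    exact Set.indicator_nonneg (fun y _ => le_min (hφ y) (Nat.cast_nonneg m)) x

lemma trunc_integrable {φ : ℝ → ℝ} (hφ : LCfun φ) (n : ℕ) : Integrable (trunc φ n) := by
  unfold trunc
  rw [integrable_indicator_iff measurableSet_Icc]
  constructor
  · exact ((hφ.min_const (Nat.cast_nonneg n)).measurable.aestronglyMeasurable).restrict
  · apply HasFiniteIntegral.of_bounded (C := (n:ℝ))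
    apply Filter.Eventually.of_forall
    intro x
    rw [Real.norm_eq_abs, abs_le]
    constructor
    · have := le_min (hφ.1 x) (Nat.cast_nonneg n)
      have hn : (0:ℝ) ≤ n := Nat.cast_nonneg n
      linarith
    · exact min_le_right _ _

lemma trunc_sup_ofReal {φ : ℝ → ℝ} (hφ : ∀ x, 0 ≤ φ x) (x : ℝ) :
    (⨆ n : ℕ, ENNReal.ofReal (trunc φ n x)) = ENNReal.ofReal (φ x) := by
  apply le_antisymm
  · exact iSup_le fun n => ENNReal.ofReal_le_ofReal (trunc_le hφ n x)
  · obtain ⟨N, hN⟩ := exists_nat_ge (max |x| (φ x))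
    have hx : x ∈ Set.Icc (-(N:ℝ)) (N:ℝ) := by
      have h1 : |x| ≤ (N:ℝ) := le_trans (le_max_left _ _) hN
      rw [abs_le] at h1
      exact ⟨h1.1, h1.2⟩
    have heq : trunc φ N x = φ x := by
      unfold trunc
      rw [Set.indicator_of_mem hx, min_eq_left (le_trans (le_max_right _ _) hN)]
    exact le_iSup_of_le N (by rw [heq])

lemma trunc_prod_bound {F G H : ℝ → ℝ} (hF : LCfun F) (hG : LCfun G) (hH : LCfun H)
    (hyp : ∀ x y, F x * G y ≤ H ((x + y) / 2) ^ 2) (hHint : Integrable H) (n : ℕ) :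
    (∫ x, trunc F n x) * (∫ x, trunc G n x) ≤ (∫ x, H x) ^ 2 := by
  have hFn := trunc_lc hF n
  have hGn := trunc_lc hG n
  set MF := sSup (Set.range (trunc F n)) with hMF
  set MG := sSup (Set.range (trunc G n)) with hMG
  have hbddF : BddAbove (Set.range (trunc F n)) := by
    refine ⟨(n:ℝ), ?_⟩; rintro _ ⟨x, rfl⟩; exact trunc_le_n hF.1 n x
  have hbddG : BddAbove (Set.range (trunc G n)) := by
    refine ⟨(n:ℝ), ?_⟩; rintro _ ⟨x, rfl⟩; exact trunc_le_n hG.1 n x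
  have hMF0 : 0 ≤ MF := le_trans (trunc_nonneg hF.1 n 0) (le_csSup hbddF (Set.mem_range_self 0))
  have hMG0 : 0 ≤ MG := le_trans (trunc_nonneg hG.1 n 0) (le_csSup hbddG (Set.mem_range_self 0))
  have hHnn : 0 ≤ ∫ x, H x := integral_nonneg hH.1
  rcases eq_or_lt_of_le hMF0 with hMFz | hMFpos
  · have hz : ∀ x, trunc F n x = 0 := fun x =>
      le_antisymm (le_trans (le_csSup hbddF (Set.mem_range_self x)) (le_of_eq hMFz.symm))
        (trunc_nonneg hF.1 n x)
    have : (∫ x, trunc F n x) = 0 := by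
      rw [show (fun x => trunc F n x) = (fun _ => (0:ℝ)) from funext hz, integral_zero]
    rw [this, zero_mul]
    positivity
  rcases eq_or_lt_of_le hMG0 with hMGz | hMGpos
  · have hz : ∀ x, trunc G n x = 0 := fun x =>
      le_antisymm (le_trans (le_csSup hbddG (Set.mem_range_self x)) (le_of_eq hMGz.symm))
        (trunc_nonneg hG.1 n x)
    have : (∫ x, trunc G n x) = 0 := by
      rw [show (fun x => trunc G n x) = (fun _ => (0:ℝ)) from funext hz, integral_zero]
    rw [this, mul_zero]
    positivity
  -- main case
  set c := Real.sqrt (MG / MF) with hc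
  have hcpos : 0 < c := Real.sqrt_pos.2 (div_pos hMGpos hMFpos)
  have hc2 : c ^ 2 = MG / MF := Real.sq_sqrt (div_nonneg hMG0 hMF0)
  have hkey : c * MF = c⁻¹ * MG := by
    have h1 : c ^ 2 * MF = MG := by
      rw [hc2]; field_simp
    field_simp
    nlinarith [h1]
  have hF'lc : LCfun (fun x => c * trunc F n x) := hFn.const_mul hcpos.le
  have hG'lc : LCfun (fun x => c⁻¹ * trunc G n x) := hGn.const_mul (inv_pos.2 hcpos).le
  have hsup : ∀ s : ℝ, 0 < s →
      ({x | s < c * trunc F n x}.Nonempty ↔ {x | s < c⁻¹ * trunc G n x}.Nonempty) := by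
    intro s hs
    have hiff1 : {x | s < c * trunc F n x}.Nonempty ↔ s < c * MF := by
      constructor
      · rintro ⟨x, hx⟩
        exact lt_of_lt_of_le hx (mul_le_mul_of_nonneg_left
          (le_csSup hbddF (Set.mem_range_self x)) hcpos.le)
      · intro h
        have h' : s / c < MF := by rwa [div_lt_iff₀' hcpos]
        obtain ⟨_, ⟨x, rfl⟩, hx⟩ := exists_lt_of_lt_csSup (Set.range_nonempty _) h'
        exact ⟨x, show s < c * trunc F n x by rwa [← div_lt_iff₀' hcpos]⟩
    have hiff2 : {x | s < c⁻¹ * trunc G n x}.Nonempty ↔ s < c⁻¹ * MG := by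
      constructor
      · rintro ⟨x, hx⟩
        exact lt_of_lt_of_le hx (mul_le_mul_of_nonneg_left
          (le_csSup hbddG (Set.mem_range_self x)) (inv_pos.2 hcpos).le)
      · intro h
        have h' : s / c⁻¹ < MG := by rwa [div_lt_iff₀' (inv_pos.2 hcpos)]
        obtain ⟨_, ⟨x, rfl⟩, hx⟩ := exists_lt_of_lt_csSup (Set.range_nonempty _) h'
        exact ⟨x, show s < c⁻¹ * trunc G n x by rwa [← div_lt_iff₀' (inv_pos.2 hcpos)]⟩
    rw [hiff1, hiff2, hkey]
  have hyp' : ∀ x y, (c * trunc F n x) * (c⁻¹ * trunc G n y) ≤ H ((x + y) / 2) ^ 2 := by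
    intro x y
    have : (c * trunc F n x) * (c⁻¹ * trunc G n y) = trunc F n x * trunc G n y := by
      rw [mul_mul_mul_comm, mul_inv_cancel₀ hcpos.ne', one_mul]
    rw [this]
    calc trunc F n x * trunc G n y ≤ F x * G y :=
          mul_le_mul (trunc_le hF.1 n x) (trunc_le hG.1 n y)
            (trunc_nonneg hG.1 n y) (hF.1 x)
      _ ≤ H ((x + y) / 2) ^ 2 := hyp x y
  have hpl := pl_add hF'lc hG'lc hH hsup hyp'
  -- convert to real integrals
  have hFint' : Integrable (fun x => c * trunc F n x) := (trunc_integrable hF n).const_mul c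
  have hGint' : Integrable (fun x => c⁻¹ * trunc G n x) := (trunc_integrable hG n).const_mul c⁻¹
  rw [← ofReal_integral_eq_lintegral_ofReal hFint'
        (Filter.Eventually.of_forall (fun x => mul_nonneg hcpos.le (trunc_nonneg hF.1 n x))),
      ← ofReal_integral_eq_lintegral_ofReal hGint'
        (Filter.Eventually.of_forall (fun x => mul_nonneg (inv_pos.2 hcpos).le (trunc_nonneg hG.1 n x))),
      ← ofReal_integral_eq_lintegral_ofReal hHint (Filter.Eventually.of_forall hH.1),
      ← ENNReal.ofReal_add (integral_nonneg (fun x => mul_nonneg hcpos.le (trunc_nonneg hF.1 n x)))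
        (integral_nonneg (fun x => mul_nonneg (inv_pos.2 hcpos).le (trunc_nonneg hG.1 n x))),
      show (2 : ENNReal) * ENNReal.ofReal (∫ x, H x) = ENNReal.ofReal (2 * ∫ x, H x) by
        rw [ENNReal.ofReal_mul (by norm_num : (0:ℝ) ≤ 2), ENNReal.ofReal_ofNat]] at hpl
  rw [ENNReal.ofReal_le_ofReal_iff (by linarith)] at hpl
  rw [integral_const_mul, integral_const_mul] at hpl
  have han : 0 ≤ ∫ x, trunc F n x := integral_nonneg (trunc_nonneg hF.1 n)
  have hbn : 0 ≤ ∫ x, trunc G n x := integral_nonneg (trunc_nonneg hG.1 n)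
  have e1 : (c * ∫ x, trunc F n x) * (c⁻¹ * ∫ x, trunc G n x) =
      (∫ x, trunc F n x) * ∫ x, trunc G n x := by
    rw [mul_mul_mul_comm, mul_inv_cancel₀ hcpos.ne', one_mul]
  have e2 : 0 ≤ (c * ∫ x, trunc F n x) + c⁻¹ * ∫ x, trunc G n x := by positivity
  have e3 : ((c * ∫ x, trunc F n x) + c⁻¹ * ∫ x, trunc G n x) ^ 2 ≤ (2 * ∫ x, H x) ^ 2 :=
    pow_le_pow_left₀ e2 hpl 2
  nlinarith [sq_nonneg ((c * ∫ x, trunc F n x) - c⁻¹ * ∫ x, trunc G n x), e1, e3]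

lemma key_prod {f : ℝ → ℝ} (hf0 : ∀ x, 0 ≤ f x) (hlc : RelLogConcave f)
    (hfi : Integrable f) (hint : ∫ x, f x = 1) (l : ℝ) :
    Integrable (fun x => Real.exp (l * x) * f x) ∧
      Integrable (fun x => Real.exp (-(l * x)) * f x) ∧
      (∫ x, Real.exp (l * x) * f x) * (∫ x, Real.exp (-(l * x)) * f x) ≤ Real.exp (l ^ 2) := by
  set F : ℝ → ℝ := fun x => Real.exp (l * x) * f x with hFdef
  set G : ℝ → ℝ := fun x => Real.exp (-(l * x)) * f x with hGdef
  set H : ℝ → ℝ := fun x => Real.exp (l ^ 2 / 2) * f x with hHdef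
  have hFlc : LCfun F := LC_tilt hf0 hlc l
  have hGlc : LCfun G := by
    have := LC_tilt hf0 hlc (-l)
    have heq : (fun x => Real.exp (-l * x) * f x) = G := by
      funext x; rw [neg_mul]
    rwa [heq] at this
  have hflc : LCfun f := by
    have := LC_tilt hf0 hlc 0
    have heq : (fun x => Real.exp (0 * x) * f x) = f := by
      funext x; rw [zero_mul, Real.exp_zero, one_mul]
    rwa [heq] at this
  have hHlc : LCfun H := hflc.const_mul (Real.exp_pos _).le
  have hHint : Integrable H := hfi.const_mul _
  have hHval : ∫ x, H x = Real.exp (l ^ 2 / 2) := by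
    rw [hHdef]; simp only []
    rw [integral_const_mul, hint, mul_one]
  have hHsq : (∫ x, H x) ^ 2 = Real.exp (l ^ 2) := by
    rw [hHval, sq, ← Real.exp_add]
    congr 1; ring
  have hyp : ∀ x y, F x * G y ≤ H ((x + y) / 2) ^ 2 := hyp_FGH hf0 hlc l
  -- truncation bounds
  have hPn : ∀ n : ℕ, (∫ x, trunc F n x) * (∫ x, trunc G n x) ≤ Real.exp (l ^ 2) := by
    intro n
    rw [← hHsq]
    exact trunc_prod_bound hFlc hGlc hHlc hyp hHint n
  set a : ℕ → ℝ := fun n => ∫ x, trunc F n x with hadef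
  set b : ℕ → ℝ := fun n => ∫ x, trunc G n x with hbdef
  have hamono : ∀ {n m : ℕ}, n ≤ m → a n ≤ a m := fun {n m} hnm =>
    integral_mono (trunc_integrable hFlc n) (trunc_integrable hFlc m) (trunc_mono hFlc.1 hnm)
  have hbmono : ∀ {n m : ℕ}, n ≤ m → b n ≤ b m := fun {n m} hnm =>
    integral_mono (trunc_integrable hGlc n) (trunc_integrable hGlc m) (trunc_mono hGlc.1 hnm)
  have hanonneg : ∀ n, 0 ≤ a n := fun n => integral_nonneg (trunc_nonneg hFlc.1 n)
  have hbnonneg : ∀ n, 0 ≤ b n := fun n => integral_nonneg (trunc_nonneg hGlc.1 n)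
  have hofa : ∀ n, ENNReal.ofReal (a n) = ∫⁻ x, ENNReal.ofReal (trunc F n x) := fun n =>
    ofReal_integral_eq_lintegral_ofReal (trunc_integrable hFlc n)
      (Filter.Eventually.of_forall (trunc_nonneg hFlc.1 n))
  have hofb : ∀ n, ENNReal.ofReal (b n) = ∫⁻ x, ENNReal.ofReal (trunc G n x) := fun n =>
    ofReal_integral_eq_lintegral_ofReal (trunc_integrable hGlc n)
      (Filter.Eventually.of_forall (trunc_nonneg hGlc.1 n))
  have hsupF : ∫⁻ x, ENNReal.ofReal (F x) = ⨆ n : ℕ, ENNReal.ofReal (a n) := by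
    have h1 : ∫⁻ x, ENNReal.ofReal (F x) = ∫⁻ x, ⨆ n : ℕ, ENNReal.ofReal (trunc F n x) := by
      apply lintegral_congr
      intro x
      rw [trunc_sup_ofReal hFlc.1 x]
    rw [h1, lintegral_iSup
      (fun n => (trunc_lc hFlc n).measurable.ennreal_ofReal)
      (fun n m hnm x => ENNReal.ofReal_le_ofReal (trunc_mono hFlc.1 hnm x))]
    exact (iSup_congr hofa).symm
  have hsupG : ∫⁻ x, ENNReal.ofReal (G x) = ⨆ n : ℕ, ENNReal.ofReal (b n) := by
    have h1 : ∫⁻ x, ENNReal.ofReal (G x) = ∫⁻ x, ⨆ n : ℕ, ENNReal.ofReal (trunc G n x) := by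
      apply lintegral_congr
      intro x
      rw [trunc_sup_ofReal hGlc.1 x]
    rw [h1, lintegral_iSup
      (fun n => (trunc_lc hGlc n).measurable.ennreal_ofReal)
      (fun n m hnm x => ENNReal.ofReal_le_ofReal (trunc_mono hGlc.1 hnm x))]
    exact (iSup_congr hofb).symm
  -- G has positive mass at some truncation level
  have hGpos : ∃ n0 : ℕ, 0 < b n0 := by
    by_contra hcon
    push_neg at hcon
    have hb0 : ∀ n, ENNReal.ofReal (b n) = 0 := fun n =>
      ENNReal.ofReal_eq_zero.2 (hcon n)
    have hG0 : ∫⁻ x, ENNReal.ofReal (G x) = 0 := by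
      rw [hsupG]
      simp [hb0]
    rw [lintegral_eq_zero_iff hGlc.measurable.ennreal_ofReal] at hG0
    have hf_ae : f =ᵐ[volume] 0 := by
      filter_upwards [hG0] with x hx
      have hGx : G x = 0 := le_antisymm (ENNReal.ofReal_eq_zero.1 hx) (hGlc.1 x)
      have : Real.exp (-(l * x)) * f x = 0 := hGx
      rcases mul_eq_zero.1 this with h | h
      · exact absurd h (Real.exp_ne_zero _)
      · exact h
    rw [integral_congr_ae hf_ae] at hint
    simp at hint
  obtain ⟨n0, hbn0⟩ := hGpos
  -- uniform bound on a n
  have hbound : ∀ n, a n ≤ Real.exp (l ^ 2) / b n0 := by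
    intro n
    set M := max n n0 with hM
    have h1 : a n * b n0 ≤ a M * b M :=
      mul_le_mul (hamono (le_max_left _ _)) (hbmono (le_max_right _ _)) hbn0.le (hanonneg M)
    have h2 : a M * b M ≤ Real.exp (l ^ 2) := hPn M
    rw [le_div_iff₀ hbn0]
    linarith
  have hFpos : ∃ m0 : ℕ, 0 < a m0 := by
    by_contra hcon
    push_neg at hcon
    have ha0 : ∀ n, ENNReal.ofReal (a n) = 0 := fun n =>
      ENNReal.ofReal_eq_zero.2 (hcon n)
    have hF0 : ∫⁻ x, ENNReal.ofReal (F x) = 0 := by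
      rw [hsupF]
      simp [ha0]
    rw [lintegral_eq_zero_iff hFlc.measurable.ennreal_ofReal] at hF0
    have hf_ae : f =ᵐ[volume] 0 := by
      filter_upwards [hF0] with x hx
      have hFx : F x = 0 := le_antisymm (ENNReal.ofReal_eq_zero.1 hx) (hFlc.1 x)
      have : Real.exp (l * x) * f x = 0 := hFx
      rcases mul_eq_zero.1 this with h | h
      · exact absurd h (Real.exp_ne_zero _)
      · exact h
    rw [integral_congr_ae hf_ae] at hint
    simp at hint
  obtain ⟨m0, ham0⟩ := hFpos
  have hboundG : ∀ n, b n ≤ Real.exp (l ^ 2) / a m0 := by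
    intro n
    set M := max n m0 with hM
    have h1 : a m0 * b n ≤ a M * b M :=
      mul_le_mul (hamono (le_max_right _ _)) (hbmono (le_max_left _ _)) (hbnonneg n) (hanonneg M)
    have h2 : a M * b M ≤ Real.exp (l ^ 2) := hPn M
    rw [le_div_iff₀ ham0]
    linarith
  have hFint : Integrable F := by
    refine ⟨hFlc.measurable.aestronglyMeasurable, ?_⟩
    rw [hasFiniteIntegral_iff_ofReal (Filter.Eventually.of_forall hFlc.1), hsupF]
    exact lt_of_le_of_lt (iSup_le fun n => ENNReal.ofReal_le_ofReal (hbound n))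
      ENNReal.ofReal_lt_top
  have hGint : Integrable G := by
    refine ⟨hGlc.measurable.aestronglyMeasurable, ?_⟩
    rw [hasFiniteIntegral_iff_ofReal (Filter.Eventually.of_forall hGlc.1), hsupG]
    exact lt_of_le_of_lt (iSup_le fun n => ENNReal.ofReal_le_ofReal (hboundG n))
      ENNReal.ofReal_lt_top
  have hofF : ENNReal.ofReal (∫ x, F x) = ⨆ n : ℕ, ENNReal.ofReal (a n) := by
    rw [ofReal_integral_eq_lintegral_ofReal hFint (Filter.Eventually.of_forall hFlc.1)]
    exact hsupF
  have hofG : ENNReal.ofReal (∫ x, G x) = ⨆ n : ℕ, ENNReal.ofReal (b n) := by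
    rw [ofReal_integral_eq_lintegral_ofReal hGint (Filter.Eventually.of_forall hGlc.1)]
    exact hsupG
  have hprod : ENNReal.ofReal ((∫ x, F x) * ∫ x, G x) ≤ ENNReal.ofReal (Real.exp (l ^ 2)) := by
    rw [ENNReal.ofReal_mul (integral_nonneg hFlc.1), hofF, hofG, ENNReal.iSup_mul]
    apply iSup_le; intro n
    rw [ENNReal.mul_iSup]
    apply iSup_le; intro m
    rw [← ENNReal.ofReal_mul (hanonneg n)]
    apply ENNReal.ofReal_le_ofReal
    calc a n * b m ≤ a (max n m) * b (max n m) :=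
          mul_le_mul (hamono (le_max_left _ _)) (hbmono (le_max_right _ _))
            (hbnonneg m) (hanonneg _)
      _ ≤ Real.exp (l ^ 2) := hPn _
  exact ⟨hFint, hGint, (ENNReal.ofReal_le_ofReal_iff (Real.exp_pos _).le).1 hprod⟩

lemma two_add_sq_le_exp (u : ℝ) : 2 + u ^ 2 ≤ Real.exp u + Real.exp (-u) := by
  have hcosh : Real.cosh u = 1 + 2 * Real.sinh (u/2) ^ 2 := by
    have h1 := Real.cosh_two_mul (u/2)
    rw [show 2 * (u/2) = u from by ring] at h1
    rw [h1, Real.cosh_sq (u/2)]; ring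
  have hsq : (u/2) ^ 2 ≤ Real.sinh (u/2) ^ 2 := by
    rcases le_or_gt 0 (u/2) with h | h
    · exact pow_le_pow_left₀ h (Real.self_le_sinh_iff.2 h) 2
    · have h1 : Real.sinh (u/2) = -Real.sinh (-(u/2)) := by rw [Real.sinh_neg, neg_neg]
      have h2 : (0:ℝ) ≤ -(u/2) := by linarith
      have h3 : -(u/2) ≤ Real.sinh (-(u/2)) := Real.self_le_sinh_iff.2 h2
      have h4 : (-(u/2)) ^ 2 ≤ Real.sinh (-(u/2)) ^ 2 := pow_le_pow_left₀ h2 h3 2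
      rw [h1]
      calc (u/2) ^ 2 = (-(u/2)) ^ 2 := by ring
        _ ≤ Real.sinh (-(u/2)) ^ 2 := h4
        _ = (-Real.sinh (-(u/2))) ^ 2 := by ring
  have h3 : (Real.exp u + Real.exp (-u)) / 2 = Real.cosh u := (Real.cosh_eq u).symm
  nlinarith [hsq, hcosh, h3]

theorem stmt_aux (f : ℝ → ℝ) (hf0 : ∀ x, 0 ≤ f x) (hlc : RelLogConcave f)
    (hint : ∫ x, f x = 1) :
    ∫ x, (x - ∫ y, y * f y) ^ 2 * f x ≤ 1 := by
  have hfi : Integrable f := by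
    by_contra hcon
    rw [integral_undef hcon] at hint
    norm_num at hint
  set m := ∫ y, y * f y with hm
  by_cases hV : Integrable (fun x => (x - m) ^ 2 * f x)
  swap
  · rw [integral_undef hV]; norm_num
  set σ2 := ∫ x, (x - m) ^ 2 * f x with hσ2
  have hσ2nn : 0 ≤ σ2 := integral_nonneg (fun x => mul_nonneg (sq_nonneg _) (hf0 x))
  -- integrability of (x-m) * f and x * f
  have hxm : Integrable (fun x => (x - m) * f x) := by
    apply Integrable.mono' (g := fun x => (((x - m) ^ 2) * f x + f x) / 2)
    · exact (hV.add hfi).div_const 2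
    · exact ((continuous_id.sub continuous_const).aestronglyMeasurable).mul hfi.1
    · apply Filter.Eventually.of_forall
      intro x
      rw [Real.norm_eq_abs, abs_mul, abs_of_nonneg (hf0 x)]
      have h1 : |x - m| ≤ ((x - m) ^ 2 + 1) / 2 := by nlinarith [sq_nonneg (|x - m| - 1), sq_abs (x - m)]
      nlinarith [mul_le_mul_of_nonneg_right h1 (hf0 x), hf0 x]
  have hxf : Integrable (fun x => x * f x) := by
    have heq : (fun x => x * f x) = fun x => (x - m) * f x + m * f x := by
      funext x; ring
    rw [heq]
    exact hxm.add (hfi.const_mul m)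
  have hmean : ∫ x, (x - m) * f x = 0 := by
    have heq : (fun x => (x - m) * f x) = fun x => x * f x - m * f x := by
      funext x; ring
    rw [heq, integral_sub hxf (hfi.const_mul m), integral_const_mul, hint, mul_one, ← hm, sub_self]
  -- key inequality for every l
  have key : ∀ l : ℝ, 1 + l ^ 2 * σ2 ≤ Real.exp (l ^ 2) := by
    intro l
    obtain ⟨hFint, hGint, hprod⟩ := key_prod hf0 hlc hfi hint l
    have hpeq : (fun x => Real.exp (l * (x - m)) * f x) =
        fun x => Real.exp (-(l * m)) * (Real.exp (l * x) * f x) := by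
      funext x; rw [← mul_assoc, ← Real.exp_add]; congr 2; ring
    have hqeq : (fun x => Real.exp (-(l * (x - m))) * f x) =
        fun x => Real.exp (l * m) * (Real.exp (-(l * x)) * f x) := by
      funext x; rw [← mul_assoc, ← Real.exp_add]; congr 2; ring
    have hp_int : Integrable (fun x => Real.exp (l * (x - m)) * f x) := by
      rw [hpeq]; exact hFint.const_mul _
    have hq_int : Integrable (fun x => Real.exp (-(l * (x - m))) * f x) := by
      rw [hqeq]; exact hGint.const_mul _
    set p := ∫ x, Real.exp (l * (x - m)) * f x with hp
    set q := ∫ x, Real.exp (-(l * (x - m))) * f x with hq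
    have hpq : p * q ≤ Real.exp (l ^ 2) := by
      have h1 : p = Real.exp (-(l * m)) * ∫ x, Real.exp (l * x) * f x := by
        rw [hp, hpeq, integral_const_mul]
      have h2 : q = Real.exp (l * m) * ∫ x, Real.exp (-(l * x)) * f x := by
        rw [hq, hqeq, integral_const_mul]
      have h3 : Real.exp (-(l * m)) * Real.exp (l * m) = 1 := by
        rw [← Real.exp_add]; simp
      calc p * q = (Real.exp (-(l * m)) * Real.exp (l * m)) *
            ((∫ x, Real.exp (l * x) * f x) * ∫ x, Real.exp (-(l * x)) * f x) := by
            rw [h1, h2]; ring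
        _ = (∫ x, Real.exp (l * x) * f x) * ∫ x, Real.exp (-(l * x)) * f x := by
            rw [h3, one_mul]
        _ ≤ Real.exp (l ^ 2) := hprod
    have hp1 : 1 ≤ p := by
      have heq : (fun x => (1 + l * (x - m)) * f x) = fun x => f x + l * ((x - m) * f x) := by
        funext x; ring
      have hint1 : Integrable (fun x => (1 + l * (x - m)) * f x) := by
        rw [heq]; exact hfi.add (hxm.const_mul l)
      have hmono : ∫ x, (1 + l * (x - m)) * f x ≤ p := by
        apply integral_mono hint1 hp_int
        intro x
        exact mul_le_mul_of_nonneg_right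
          (by linarith [Real.add_one_le_exp (l * (x - m))]) (hf0 x)
      have hval : ∫ x, (1 + l * (x - m)) * f x = 1 := by
        rw [heq, integral_add hfi (hxm.const_mul l), hint, integral_const_mul, hmean,
          mul_zero, add_zero]
      linarith
    have hq1 : 1 ≤ q := by
      have heq : (fun x => (1 + (-l) * (x - m)) * f x) =
          fun x => f x + (-l) * ((x - m) * f x) := by
        funext x; ring
      have hint1 : Integrable (fun x => (1 + (-l) * (x - m)) * f x) := by
        rw [heq]; exact hfi.add (hxm.const_mul (-l))
      have hmono : ∫ x, (1 + (-l) * (x - m)) * f x ≤ q := by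
        apply integral_mono hint1 hq_int
        intro x
        apply mul_le_mul_of_nonneg_right _ (hf0 x)
        have := Real.add_one_le_exp (-(l * (x - m)))
        have harg : -(l * (x - m)) = (-l) * (x - m) := by ring
        linarith [harg ▸ this]
      have hval : ∫ x, (1 + (-l) * (x - m)) * f x = 1 := by
        rw [heq, integral_add hfi (hxm.const_mul (-l)), hint, integral_const_mul, hmean,
          mul_zero, add_zero]
      linarith
    have hsum : 2 + l ^ 2 * σ2 ≤ p + q := by
      have heqL : (fun x => (2 + l ^ 2 * (x - m) ^ 2) * f x) =
          fun x => 2 * f x + l ^ 2 * ((x - m) ^ 2 * f x) := by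
        funext x; ring
      have hintL : Integrable (fun x => (2 + l ^ 2 * (x - m) ^ 2) * f x) := by
        rw [heqL]; exact (hfi.const_mul 2).add (hV.const_mul (l ^ 2))
      have heqR : (fun x => Real.exp (l * (x - m)) * f x + Real.exp (-(l * (x - m))) * f x) =
          fun x => (Real.exp (l * (x - m)) + Real.exp (-(l * (x - m)))) * f x := by
        funext x; ring
      have hmono : ∫ x, (2 + l ^ 2 * (x - m) ^ 2) * f x ≤ p + q := by
        rw [hp, hq, ← integral_add hp_int hq_int]
        apply integral_mono hintL (hp_int.add hq_int)
        intro x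
        have h := two_add_sq_le_exp (l * (x - m))
        have h2 : (l * (x - m)) ^ 2 = l ^ 2 * (x - m) ^ 2 := by ring
        rw [h2] at h
        show (2 + l ^ 2 * (x - m) ^ 2) * f x ≤
          Real.exp (l * (x - m)) * f x + Real.exp (-(l * (x - m))) * f x
        nlinarith [mul_le_mul_of_nonneg_right h (hf0 x)]
      have hval : ∫ x, (2 + l ^ 2 * (x - m) ^ 2) * f x = 2 + l ^ 2 * σ2 := by
        rw [heqL, integral_add (hfi.const_mul 2) (hV.const_mul (l ^ 2)),
          integral_const_mul, integral_const_mul, hint, mul_one, ← hσ2]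
      linarith
    nlinarith [mul_nonneg (sub_nonneg.2 hp1) (sub_nonneg.2 hq1)]
  -- conclude
  by_contra hcon
  push_neg at hcon
  set t := (σ2 - 1) / (2 * σ2) with ht
  have hσpos : 0 < σ2 := by linarith
  have htpos : 0 < t := div_pos (by linarith) (by linarith)
  have htlt : t < 1 := by
    rw [ht, div_lt_one (by linarith)]; linarith
  set l := Real.sqrt t with hl
  have hl2 : l ^ 2 = t := Real.sq_sqrt htpos.le
  have hkey := key l
  rw [hl2] at hkey
  have hexp1 : Real.exp t * (1 - t) ≤ 1 := by
    have h1 : 1 - t ≤ Real.exp (-t) := by linarith [Real.add_one_le_exp (-t)]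
    calc Real.exp t * (1 - t) ≤ Real.exp t * Real.exp (-t) :=
          mul_le_mul_of_nonneg_left h1 (Real.exp_pos t).le
      _ = 1 := by rw [← Real.exp_add]; simp
  have h4 : (1 + t * σ2) * (1 - t) ≤ 1 :=
    le_trans (mul_le_mul_of_nonneg_right hkey (by linarith)) hexp1
  have ht2 : t * (2 * σ2) = σ2 - 1 := by
    rw [ht]; field_simp
  nlinarith [h4, ht2, htpos, hσpos, hcon, mul_pos htpos hσpos]

end Aux

theorem stmt15 (f : ℝ → ℝ) (hf0 : ∀ x, 0 ≤ f x) (hlc : RelLogConcave f)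
    (hint : ∫ x, f x = 1) :
    ∫ x, (x - ∫ y, y * f y) ^ 2 * f x ≤ 1 := by
  exact stmt_aux f hf0 hlc hint
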